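/- Let h : ℝ^n → ℝ be quasi-convex and continuous, X ⊆ ℝ^n closed and convex, and X* the set of minimizers of h over X, assumed nonempty. Suppose h satisfies the Hölder condition of order p > 0 with modulus L > 0 at some x* ∈ X*, i.e., |h(y) - h(x*)| ≤ L‖y - x*‖^p for all y. Then for any x ∈ X \ X* and any unit vector g in the quasi-subdifferential ∂h(x), one has h(x) - h(x*) ≤ L ⟨g, x - x*⟩^p. -/

import Mathlib

theorem stmt4 {n : ℕ} (h : EuclideanSpace ℝ (Fin n) → ℝ)
    (hqc : QuasiconvexOn ℝ Set.univ h) (hcont : Continuous h)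
    (X : Set (EuclideanSpace ℝ (Fin n))) (hXne : X.Nonempty)
    (hXc : IsClosed X) (hXconv : Convex ℝ X)
    (p L : ℝ) (hp : 0 < p) (hL : 0 < L)
    (xstar : EuclideanSpace ℝ (Fin n)) (hxsX : xstar ∈ X)
    (hmin : ∀ y ∈ X, h xstar ≤ h y)
    (hHolder : ∀ y, |h y - h xstar| ≤ L * ‖y - xstar‖ ^ p)
    (x : EuclideanSpace ℝ (Fin n)) (hxX : x ∈ X)
    (hxnotopt : ¬ ∀ y ∈ X, h x ≤ h y)
    (g : EuclideanSpace ℝ (Fin n)) (hg : ‖g‖ = 1)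
    (hgsub : ∀ y, h y < h x → (inner ℝ g (y - x) : ℝ) ≤ 0) :
    h x - h xstar ≤ L * (inner ℝ g (x - xstar) : ℝ) ^ p := by
  -- h xstar < h x
  push_neg at hxnotopt
  obtain ⟨y, hyX, hyx⟩ := hxnotopt
  have hlt : h xstar < h x := lt_of_le_of_lt (hmin y hyX) hyx
  set d : ℝ := (inner ℝ g (x - xstar) : ℝ) with hd
  have hd0 : 0 ≤ d := by
    have := hgsub xstar hlt
    have h2 : (inner ℝ g (xstar - x) : ℝ) = -d := by
      rw [hd, ← inner_neg_right]; congr 1; abel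
    linarith [h2 ▸ this]
  -- inner product along the line
  have hline : ∀ s : ℝ, (inner ℝ g ((xstar + s • g) - x) : ℝ) = s - d := by
    intro s
    have : (xstar + s • g) - x = s • g - (x - xstar) := by abel
    rw [this, inner_sub_right, inner_smul_right, real_inner_self_eq_norm_sq, hg, ← hd]
    ring
  -- claim: h (xstar + d • g) ≥ h x
  have key : h x ≤ h (xstar + d • g) := by
    by_contra hc
    push_neg at hc
    have hopen : IsOpen {s : ℝ | h (xstar + s • g) < h x} := by
      have hf : Continuous fun s : ℝ => h (xstar + s • g) := by
        exact hcont.comp (continuous_const.add (continuous_id.smul continuous_const))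
      exact isOpen_lt hf continuous_const
    have hdmem : d ∈ {s : ℝ | h (xstar + s • g) < h x} := hc
    obtain ⟨ε, hε, hball⟩ := Metric.isOpen_iff.1 hopen d hdmem
    have hs : d + ε / 2 ∈ Metric.ball d ε := by
      rw [Metric.mem_ball, Real.dist_eq, show d + ε / 2 - d = ε / 2 by ring,
        abs_of_pos (half_pos hε)]
      linarith
    have := hgsub (xstar + (d + ε / 2) • g) (hball hs)
    rw [hline] at this
    linarith
  -- Hölder
  have hH := hHolder (xstar + d • g)
  have hnorm : ‖(xstar + d • g) - xstar‖ = d := by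
    have : (xstar + d • g) - xstar = d • g := by abel
    rw [this, norm_smul, hg, mul_one, Real.norm_eq_abs, abs_of_nonneg hd0]
  rw [hnorm] at hH
  have : h (xstar + d • g) - h xstar ≤ L * d ^ p :=
    le_trans (le_abs_self _) hH
  linarith [key]
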